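/- Let G be an amenable discrete group with integer-valued length function ℓ satisfying the Haagerup-type condition. Then the balls B_p = {x ∈ G : ℓ(x) ≤ p} satisfy |B_p| ≤ C'(p+1)³ for some constant C' and all p. -/

import Mathlib

open scoped Classical

/-- The `ℓ²`-norm of a finitely supported function. -/
noncomputable def fnorm2 {G : Type*} (f : MonoidAlgebra ℂ G) : ℝ :=
  Real.sqrt (∑ x ∈ f.coeff.support, ‖f.coeff x‖ ^ 2)

/-- `f` is supported on the sphere `E_k = {x : ℓ x = k}`. -/
def SuppOnSphere {G : Type*} (ℓ : G → ℕ) (k : ℕ) (f : MonoidAlgebra ℂ G) : Prop :=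
  ∀ x, f.coeff x ≠ 0 → ℓ x = k

/-- `P_m f`: the restriction (orthogonal projection in `ℓ²(G)`) of `f` to the
sphere `E_m = {x : ℓ x = m}`. -/
noncomputable def sphProj {G : Type*} (ℓ : G → ℕ) (m : ℕ) (f : MonoidAlgebra ℂ G) :
    MonoidAlgebra ℂ G :=
  MonoidAlgebra.ofCoeff (f.coeff.filter (fun x => ℓ x = m))

/-- `ℓ` is an integer-valued length function on the group `G`. -/
def IsLengthFunction {G : Type*} [Group G] (ℓ : G → ℕ) : Prop :=
  ℓ 1 = 0 ∧ (∀ g : G, ℓ g⁻¹ = ℓ g) ∧ ∀ g h : G, ℓ (g * h) ≤ ℓ g + ℓ h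

/-- The Haagerup-type condition for `(G, ℓ)` with constant `C`:
`‖P_m f P_n‖ ≤ C ‖f‖₂` for every `f` supported on the sphere `E_k`, expressed
concretely on `ℓ²(G)`: for every finitely supported `ξ` supported on `E_n`,
`‖P_m (f * ξ)‖₂ ≤ C ‖f‖₂ ‖ξ‖₂` (where `f * ξ` is the convolution). -/
def GroupHaagerupCond {G : Type*} [Group G] (ℓ : G → ℕ) (C : ℝ) : Prop :=
  ∀ (k m n : ℕ) (f ξ : MonoidAlgebra ℂ G),
    SuppOnSphere ℓ k f → SuppOnSphere ℓ n ξ →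
    fnorm2 (sphProj ℓ m (f * ξ)) ≤ C * fnorm2 f * fnorm2 ξ

/-- Amenability of a discrete group, in the Følner form: for every finite set `S`
and `ε > 0` there is a nonempty finite set `F` with `|sF \ F| ≤ ε|F|` for all `s ∈ S`. -/
def FolnerAmenable (G : Type*) [Group G] : Prop :=
  ∀ (S : Finset G) (ε : ℝ), 0 < ε → ∃ F : Finset G, F.Nonempty ∧
    ∀ s ∈ S, (((F.image (fun x => s * x)) \ F).card : ℝ) ≤ ε * F.card

section aux
variable {G : Type*}

/-- squared ℓ² norm -/
noncomputable def sq2 (f : MonoidAlgebra ℂ G) : ℝ := ∑ x ∈ f.coeff.support, ‖f.coeff x‖ ^ 2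

lemma sq2_nonneg (f : MonoidAlgebra ℂ G) : 0 ≤ sq2 f :=
  Finset.sum_nonneg fun _ _ => sq_nonneg _

lemma fnorm2_eq (f : MonoidAlgebra ℂ G) : fnorm2 f = Real.sqrt (sq2 f) := rfl

lemma fnorm2_nonneg (f : MonoidAlgebra ℂ G) : 0 ≤ fnorm2 f := Real.sqrt_nonneg _

lemma fnorm2_sq (f : MonoidAlgebra ℂ G) : fnorm2 f ^ 2 = sq2 f := by
  rw [fnorm2_eq, Real.sq_sqrt (sq2_nonneg f)]

lemma sq2_eq_sum (f : MonoidAlgebra ℂ G) (s : Finset G) (hs : f.coeff.support ⊆ s) :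
    sq2 f = ∑ x ∈ s, ‖f.coeff x‖ ^ 2 := by
  refine Finset.sum_subset hs fun x _ hx => ?_
  rw [Finsupp.notMem_support_iff.mp hx]
  simp

lemma fnorm2_zero : fnorm2 (0 : MonoidAlgebra ℂ G) = 0 := by
  simp [fnorm2]

lemma fnorm2_add_le (a b : MonoidAlgebra ℂ G) :
    fnorm2 (a + b) ≤ fnorm2 a + fnorm2 b := by
  set s : Finset G := a.coeff.support ∪ b.coeff.support with hs
  have hsupa : a.coeff.support ⊆ s := Finset.subset_union_left
  have hsupb : b.coeff.support ⊆ s := Finset.subset_union_right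
  have hsupab : (a + b).coeff.support ⊆ s := Finsupp.support_add
  let u : EuclideanSpace ℂ ↥s := WithLp.toLp 2 (fun i => a.coeff i)
  let v : EuclideanSpace ℂ ↥s := WithLp.toLp 2 (fun i => b.coeff i)
  have ha : fnorm2 a = ‖u‖ := by
    rw [fnorm2_eq, sq2_eq_sum a s hsupa, EuclideanSpace.norm_eq,
      ← Finset.sum_attach s fun x => ‖a.coeff x‖ ^ 2]
    rfl
  have hb : fnorm2 b = ‖v‖ := by
    rw [fnorm2_eq, sq2_eq_sum b s hsupb, EuclideanSpace.norm_eq,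
      ← Finset.sum_attach s fun x => ‖b.coeff x‖ ^ 2]
    rfl
  have hab : fnorm2 (a + b) = ‖u + v‖ := by
    rw [fnorm2_eq, sq2_eq_sum (a + b) s hsupab, EuclideanSpace.norm_eq,
      ← Finset.sum_attach s fun x => ‖(a + b).coeff x‖ ^ 2]
    simp only [MonoidAlgebra.coeff_add, Finsupp.add_apply]
    rfl
  rw [ha, hb, hab]
  exact norm_add_le u v

lemma fnorm2_sum_le {ι : Type*} (s : Finset ι) (g : ι → MonoidAlgebra ℂ G) :
    fnorm2 (∑ i ∈ s, g i) ≤ ∑ i ∈ s, fnorm2 (g i) := by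
  classical
  induction s using Finset.induction with
  | empty => simp [fnorm2_zero]
  | insert _ _ h ih =>
    rw [Finset.sum_insert h, Finset.sum_insert h]
    exact le_trans (fnorm2_add_le _ _) (by linarith)

end aux


section aux2
variable {G : Type*} (ℓ : G → ℕ)

lemma sphProj_apply (m : ℕ) (f : MonoidAlgebra ℂ G) (x : G) :
    (sphProj ℓ m f).coeff x = if ℓ x = m then f.coeff x else 0 := by
  simp [sphProj, Finsupp.filter_apply]

lemma suppOnSphere_sphProj (m : ℕ) (f : MonoidAlgebra ℂ G) :
    SuppOnSphere ℓ m (sphProj ℓ m f) := by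
  intro x hx
  rw [sphProj_apply] at hx
  by_contra h
  simp [h] at hx

lemma sphProj_add (m : ℕ) (a b : MonoidAlgebra ℂ G) :
    sphProj ℓ m (a + b) = sphProj ℓ m a + sphProj ℓ m b := by
  ext x
  rw [MonoidAlgebra.coeff_add, Finsupp.add_apply, sphProj_apply, sphProj_apply, sphProj_apply, MonoidAlgebra.coeff_add, Finsupp.add_apply]
  split <;> simp

lemma sphProj_sum {ι : Type*} (m : ℕ) (s : Finset ι) (g : ι → MonoidAlgebra ℂ G) :
    sphProj ℓ m (∑ i ∈ s, g i) = ∑ i ∈ s, sphProj ℓ m (g i) := by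
  classical
  induction s using Finset.induction with
  | empty =>
    ext x
    rw [Finset.sum_empty, Finset.sum_empty, sphProj_apply]
    split <;> rfl
  | insert _ _ h ih => rw [Finset.sum_insert h, Finset.sum_insert h, sphProj_add, ih]

/-- decomposition of a function into its sphere pieces -/
lemma sum_sphProj (f : MonoidAlgebra ℂ G) (M : Finset ℕ)
    (hM : ∀ x ∈ f.coeff.support, ℓ x ∈ M) : ∑ m ∈ M, sphProj ℓ m f = f := by
  ext x
  rw [MonoidAlgebra.coeff_sum, Finsupp.finset_sum_apply]
  simp only [sphProj_apply]
  rw [Finset.sum_ite_eq M (ℓ x) (fun _ => f.coeff x)]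
  by_cases hx : f.coeff x = 0
  · simp [hx]
  · rw [if_pos (hM x (Finsupp.mem_support_iff.mpr hx))]

/-- Pythagoras: sum of squared norms of sphere pieces -/
lemma sum_sq2_sphProj (f : MonoidAlgebra ℂ G) (M : Finset ℕ)
    (hM : ∀ x ∈ f.coeff.support, ℓ x ∈ M) :
    ∑ m ∈ M, sq2 (sphProj ℓ m f) = sq2 f := by
  have h1 : ∀ m, sq2 (sphProj ℓ m f) = ∑ x ∈ f.coeff.support.filter (fun x => ℓ x = m), ‖f.coeff x‖ ^ 2 := by
    intro m
    unfold sq2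
    rw [show (sphProj ℓ m f).coeff.support = f.coeff.support.filter (fun x => ℓ x = m) from
      Finsupp.support_filter _ _]
    refine Finset.sum_congr rfl fun x hx => ?_
    rw [sphProj_apply, if_pos (Finset.mem_filter.mp hx).2]
  simp_rw [h1]
  exact Finset.sum_fiberwise_of_maps_to hM _

/-- vanishing of sphere projection of a product of sphere-supported functions -/
lemma sphProj_mul_eq_zero [Group G] (hℓ : IsLengthFunction ℓ) {k m n : ℕ}
    {f ξ : MonoidAlgebra ℂ G} (hf : SuppOnSphere ℓ k f) (hξ : SuppOnSphere ℓ n ξ)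
    (hm : ¬(m ≤ k + n ∧ n ≤ k + m)) : sphProj ℓ m (f * ξ) = 0 := by
  obtain ⟨h1, hinv, hsub⟩ := hℓ
  ext x
  rw [sphProj_apply]
  by_cases hx : ℓ x = m
  · rw [if_pos hx]
    by_contra hne
    have hmem : x ∈ (f * ξ).coeff.support := Finsupp.mem_support_iff.mpr hne
    have := MonoidAlgebra.support_coeff_mul_subset f ξ hmem
    rw [Finset.mem_mul] at this
    obtain ⟨a, ha, b, hb, hab⟩ := this
    have hak : ℓ a = k := hf a (Finsupp.mem_support_iff.mp ha)
    have hbn : ℓ b = n := hξ b (Finsupp.mem_support_iff.mp hb)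
    apply hm
    constructor
    · rw [← hx, ← hab, ← hak, ← hbn]; exact hsub a b
    · have : b = a⁻¹ * x := by rw [← hab]; group
      rw [← hbn, this]
      calc ℓ (a⁻¹ * x) ≤ ℓ a⁻¹ + ℓ x := hsub _ _
        _ = k + m := by rw [hinv, hak, hx]
  · rw [if_neg hx]; rfl

end aux2


section key
variable {G : Type*} [Group G] (ℓ : G → ℕ)

/-- number of naturals in a finset lying in a window of radius p around m -/
lemma card_window_le (N : Finset ℕ) (m p : ℕ) :
    (N.filter (fun n => m ≤ p + n ∧ n ≤ p + m)).card ≤ 2 * p + 1 := by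
  have hsub : N.filter (fun n => m ≤ p + n ∧ n ≤ p + m) ⊆ Finset.Icc (m - p) (m + p) := by
    intro n hn
    obtain ⟨-, h1, h2⟩ := Finset.mem_filter.mp hn
    rw [Finset.mem_Icc]
    omega
  calc (N.filter _).card ≤ (Finset.Icc (m - p) (m + p)).card := Finset.card_le_card hsub
    _ = m + p + 1 - (m - p) := Nat.card_Icc _ _
    _ ≤ 2 * p + 1 := by omega

lemma key_mul_bound (hℓ : IsLengthFunction ℓ) {C : ℝ} (hH : GroupHaagerupCond ℓ C)
    (p : ℕ) (f ξ : MonoidAlgebra ℂ G) (hf : ∀ x, f.coeff x ≠ 0 → ℓ x ≤ p) :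
    sq2 (f * ξ) ≤ C ^ 2 * ((p : ℝ) + 1) * (2 * (p : ℝ) + 1) ^ 2 * (sq2 f * sq2 ξ) := by
  set K : Finset ℕ := Finset.range (p + 1) with hK
  set N : Finset ℕ := ξ.coeff.support.image ℓ with hN
  set fk : ℕ → MonoidAlgebra ℂ G := fun k => sphProj ℓ k f with hfk
  set ξn : ℕ → MonoidAlgebra ℂ G := fun n => sphProj ℓ n ξ with hξn
  have hfK : ∀ x ∈ f.coeff.support, ℓ x ∈ K := fun x hx => by
    rw [hK, Finset.mem_range]
    exact Nat.lt_succ_of_le (hf x (Finsupp.mem_support_iff.mp hx))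
  have hξN : ∀ x ∈ ξ.coeff.support, ℓ x ∈ N := fun x hx => Finset.mem_image_of_mem ℓ hx
  have hdecomp : f * ξ = ∑ q ∈ K ×ˢ N, fk q.1 * ξn q.2 := by
    conv_lhs => rw [← sum_sphProj ℓ f K hfK, ← sum_sphProj ℓ ξ N hξN]
    rw [Finset.sum_mul_sum, Finset.sum_product]
  set M : Finset ℕ := (f * ξ).coeff.support.image ℓ with hM
  have hMsup : ∀ x ∈ (f * ξ).coeff.support, ℓ x ∈ M := fun x hx => Finset.mem_image_of_mem ℓ hx
  -- bound each projection
  have hproj : ∀ m : ℕ, sq2 (sphProj ℓ m (f * ξ)) ≤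
      ((p : ℝ) + 1) * (2 * (p : ℝ) + 1) *
        ∑ q ∈ (K ×ˢ N).filter (fun q => m ≤ q.1 + q.2 ∧ q.2 ≤ q.1 + m),
          C ^ 2 * sq2 (fk q.1) * sq2 (ξn q.2) := by
    intro m
    set S := (K ×ˢ N).filter (fun q : ℕ × ℕ => m ≤ q.1 + q.2 ∧ q.2 ≤ q.1 + m) with hS
    have h1 : sphProj ℓ m (f * ξ) = ∑ q ∈ S, sphProj ℓ m (fk q.1 * ξn q.2) := by
      rw [hdecomp, sphProj_sum]
      refine (Finset.sum_filter_of_ne ?_).symm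
      intro q hq hne
      by_contra hcond
      exact hne (sphProj_mul_eq_zero ℓ hℓ (suppOnSphere_sphProj ℓ q.1 f)
        (suppOnSphere_sphProj ℓ q.2 ξ) hcond)
    have h2 : fnorm2 (sphProj ℓ m (f * ξ)) ≤ ∑ q ∈ S, C * fnorm2 (fk q.1) * fnorm2 (ξn q.2) := by
      rw [h1]
      refine le_trans (fnorm2_sum_le S _) (Finset.sum_le_sum fun q hq => ?_)
      exact hH q.1 m q.2 (fk q.1) (ξn q.2) (suppOnSphere_sphProj ℓ q.1 f)
        (suppOnSphere_sphProj ℓ q.2 ξ)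
    have h3 : sq2 (sphProj ℓ m (f * ξ)) ≤
        (S.card : ℝ) * ∑ q ∈ S, C ^ 2 * sq2 (fk q.1) * sq2 (ξn q.2) := by
      rw [← fnorm2_sq]
      calc fnorm2 (sphProj ℓ m (f * ξ)) ^ 2
          ≤ (∑ q ∈ S, C * fnorm2 (fk q.1) * fnorm2 (ξn q.2)) ^ 2 := by
            apply sq_le_sq'
            · have h0 : (0:ℝ) ≤ ∑ q ∈ S, C * fnorm2 (fk q.1) * fnorm2 (ξn q.2) :=
                le_trans (fnorm2_nonneg _) h2
              linarith [fnorm2_nonneg (sphProj ℓ m (f * ξ))]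
            · exact h2
        _ = (∑ q ∈ S, 1 * (C * fnorm2 (fk q.1) * fnorm2 (ξn q.2))) ^ 2 := by simp
        _ ≤ (∑ q ∈ S, (1:ℝ) ^ 2) * ∑ q ∈ S, (C * fnorm2 (fk q.1) * fnorm2 (ξn q.2)) ^ 2 :=
            Finset.sum_mul_sq_le_sq_mul_sq S _ _
        _ = (S.card : ℝ) * ∑ q ∈ S, C ^ 2 * sq2 (fk q.1) * sq2 (ξn q.2) := by
            congr 1
            · simp
            · refine Finset.sum_congr rfl fun q hq => ?_
              rw [mul_pow, mul_pow, fnorm2_sq, fnorm2_sq]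
    have hcard : (S.card : ℝ) ≤ ((p : ℝ) + 1) * (2 * (p : ℝ) + 1) := by
      have hsub : S ⊆ K ×ˢ (N.filter (fun n => m ≤ p + n ∧ n ≤ p + m)) := by
        intro q hq
        obtain ⟨hqKN, h1, h2⟩ := Finset.mem_filter.mp hq
        rw [Finset.mem_product] at hqKN ⊢
        obtain ⟨hqK, hqN⟩ := hqKN
        have hkp : q.1 ≤ p := Nat.lt_succ_iff.mp (Finset.mem_range.mp hqK)
        exact ⟨hqK, Finset.mem_filter.mpr ⟨hqN, by omega, by omega⟩⟩
      have : S.card ≤ (p + 1) * (2 * p + 1) := by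
        calc S.card ≤ _ := Finset.card_le_card hsub
          _ = K.card * (N.filter _).card := Finset.card_product _ _
          _ ≤ (p + 1) * (2 * p + 1) := by
            apply Nat.mul_le_mul
            · simp [hK]
            · exact card_window_le N m p
      calc (S.card : ℝ) ≤ ((p + 1) * (2 * p + 1) : ℕ) := by exact_mod_cast this
        _ = ((p : ℝ) + 1) * (2 * (p : ℝ) + 1) := by push_cast; ring
    refine le_trans h3 (mul_le_mul_of_nonneg_right hcard ?_)
    exact Finset.sum_nonneg fun q hq =>
      mul_nonneg (mul_nonneg (sq_nonneg C) (sq2_nonneg _)) (sq2_nonneg _)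
  -- sum over m
  set t : ℕ × ℕ → ℝ := fun q => C ^ 2 * sq2 (fk q.1) * sq2 (ξn q.2) with ht
  have htnn : ∀ q, 0 ≤ t q := fun q =>
    mul_nonneg (mul_nonneg (sq_nonneg C) (sq2_nonneg _)) (sq2_nonneg _)
  have hdec : sq2 (f * ξ) = ∑ m ∈ M, sq2 (sphProj ℓ m (f * ξ)) :=
    (sum_sq2_sphProj ℓ (f * ξ) M hMsup).symm
  have hswap : ∑ m ∈ M, ∑ q ∈ (K ×ˢ N).filter (fun q => m ≤ q.1 + q.2 ∧ q.2 ≤ q.1 + m), t q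
      ≤ (2 * (p : ℝ) + 1) * ∑ q ∈ K ×ˢ N, t q := by
    have e1 : ∀ m : ℕ, ∑ q ∈ (K ×ˢ N).filter (fun q => m ≤ q.1 + q.2 ∧ q.2 ≤ q.1 + m), t q
        = ∑ q ∈ K ×ˢ N, if m ≤ q.1 + q.2 ∧ q.2 ≤ q.1 + m then t q else 0 :=
      fun m => Finset.sum_filter _ _
    simp_rw [e1]
    rw [Finset.sum_comm, Finset.mul_sum]
    refine Finset.sum_le_sum fun q hq => ?_
    have e2 : ∑ m ∈ M, (if m ≤ q.1 + q.2 ∧ q.2 ≤ q.1 + m then t q else 0)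
        = ((M.filter (fun m => m ≤ q.1 + q.2 ∧ q.2 ≤ q.1 + m)).card : ℝ) * t q := by
      rw [← Finset.sum_filter, Finset.sum_const, nsmul_eq_mul]
    rw [e2]
    refine mul_le_mul_of_nonneg_right ?_ (htnn q)
    have hk : q.1 ≤ p :=
      Nat.lt_succ_iff.mp (Finset.mem_range.mp (Finset.mem_product.mp hq).1)
    have hsub : M.filter (fun m => m ≤ q.1 + q.2 ∧ q.2 ≤ q.1 + m)
        ⊆ M.filter (fun m => q.2 ≤ p + m ∧ m ≤ p + q.2) := by
      intro m hm
      obtain ⟨hmM, h1, h2⟩ := Finset.mem_filter.mp hm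
      exact Finset.mem_filter.mpr ⟨hmM, by omega, by omega⟩
    have hc : (M.filter (fun m => m ≤ q.1 + q.2 ∧ q.2 ≤ q.1 + m)).card ≤ 2 * p + 1 :=
      le_trans (Finset.card_le_card hsub) (card_window_le M q.2 p)
    calc ((M.filter _).card : ℝ) ≤ ((2 * p + 1 : ℕ) : ℝ) := by exact_mod_cast hc
      _ = 2 * (p : ℝ) + 1 := by push_cast; ring
  have hprodsum : ∑ q ∈ K ×ˢ N, t q = C ^ 2 * (sq2 f * sq2 ξ) := by
    rw [Finset.sum_product]
    calc ∑ k ∈ K, ∑ n ∈ N, C ^ 2 * sq2 (fk k) * sq2 (ξn n)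
        = ∑ k ∈ K, C ^ 2 * sq2 (fk k) * ∑ n ∈ N, sq2 (ξn n) := by
          refine Finset.sum_congr rfl fun k _ => ?_
          rw [Finset.mul_sum]
      _ = (∑ k ∈ K, sq2 (fk k)) * (C ^ 2 * ∑ n ∈ N, sq2 (ξn n)) := by
          rw [Finset.sum_mul]
          refine Finset.sum_congr rfl fun k _ => ?_
          ring
      _ = C ^ 2 * (sq2 f * sq2 ξ) := by
          rw [sum_sq2_sphProj ℓ f K hfK, sum_sq2_sphProj ℓ ξ N hξN]
          ring
  calc sq2 (f * ξ) = ∑ m ∈ M, sq2 (sphProj ℓ m (f * ξ)) := hdec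
    _ ≤ ∑ m ∈ M, ((p : ℝ) + 1) * (2 * (p : ℝ) + 1) *
          ∑ q ∈ (K ×ˢ N).filter (fun q => m ≤ q.1 + q.2 ∧ q.2 ≤ q.1 + m), t q :=
        Finset.sum_le_sum fun m _ => hproj m
    _ = ((p : ℝ) + 1) * (2 * (p : ℝ) + 1) *
          ∑ m ∈ M, ∑ q ∈ (K ×ˢ N).filter (fun q => m ≤ q.1 + q.2 ∧ q.2 ≤ q.1 + m), t q := by
        rw [Finset.mul_sum]
    _ ≤ ((p : ℝ) + 1) * (2 * (p : ℝ) + 1) * ((2 * (p : ℝ) + 1) * ∑ q ∈ K ×ˢ N, t q) := by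
        refine mul_le_mul_of_nonneg_left hswap ?_
        positivity
    _ = C ^ 2 * ((p : ℝ) + 1) * (2 * (p : ℝ) + 1) ^ 2 * (sq2 f * sq2 ξ) := by
        rw [hprodsum]
        ring

end key


section final
variable {G : Type*} [Group G]

/-- indicator of a finite set as an element of the group algebra -/
noncomputable def indf (A : Finset G) : MonoidAlgebra ℂ G :=
  ∑ a ∈ A, MonoidAlgebra.single a (1 : ℂ)

lemma indf_apply (A : Finset G) (x : G) : (indf A).coeff x = if x ∈ A then 1 else 0 := by
  rw [indf, MonoidAlgebra.coeff_sum, Finsupp.finset_sum_apply]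
  simp_rw [MonoidAlgebra.single_apply]
  exact Finset.sum_ite_eq' A x (fun _ => (1 : ℂ))

lemma indf_support (A : Finset G) : (indf A).coeff.support ⊆ A := by
  intro x hx
  have := Finsupp.mem_support_iff.mp hx
  rw [indf_apply] at this
  by_contra h
  exact this (if_neg h)

lemma sq2_indf (A : Finset G) : sq2 (indf A) = A.card := by
  rw [sq2_eq_sum (indf A) A (indf_support A)]
  rw [Finset.sum_congr rfl fun x hx => by rw [indf_apply, if_pos hx]]
  simp

lemma indf_mul_apply (A : Finset G) (ξ : MonoidAlgebra ℂ G) (y : G) :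
    (indf A * ξ).coeff y = ∑ a ∈ A, ξ.coeff (a⁻¹ * y) := by
  rw [indf, Finset.sum_mul, MonoidAlgebra.coeff_sum, Finsupp.finset_sum_apply]
  refine Finset.sum_congr rfl fun a _ => ?_
  rw [MonoidAlgebra.single_mul_apply, one_mul]

lemma one_le_haagerup_const (ℓ : G → ℕ) (hℓ : IsLengthFunction ℓ) {C : ℝ}
    (hH : GroupHaagerupCond ℓ C) : 1 ≤ C := by
  set f : MonoidAlgebra ℂ G := MonoidAlgebra.single 1 1 with hf
  have hsupp : SuppOnSphere ℓ 0 f := by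
    intro x hx
    rw [hf, MonoidAlgebra.single_apply] at hx
    by_cases h : (1 : G) = x
    · rw [← h, hℓ.1]
    · exact absurd (if_neg h) hx
  have hmul : f * f = f := by
    rw [hf, MonoidAlgebra.single_mul_single, one_mul, one_mul]
  have hproj : sphProj ℓ 0 f = f := by
    ext x
    rw [sphProj_apply]
    by_cases h : ℓ x = 0
    · rw [if_pos h]
    · rw [if_neg h]
      by_contra hne
      exact h (hsupp x fun hc => hne hc.symm)
  have hnorm : fnorm2 f = 1 := by
    rw [fnorm2_eq, sq2_eq_sum f {1} ?_]
    · simp [hf, MonoidAlgebra.single_apply]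
    · intro x hx
      have := Finsupp.mem_support_iff.mp hx
      rw [hf, MonoidAlgebra.single_apply] at this
      by_contra h
      rw [Finset.mem_singleton] at h
      exact this (if_neg fun hc => h hc.symm)
  have := hH 0 0 0 f f hsupp hsupp
  rw [hmul, hproj, hnorm] at this
  linarith

lemma card_ball_bound (ℓ : G → ℕ) (hℓ : IsLengthFunction ℓ) (ham : FolnerAmenable G)
    {C : ℝ} (hH : GroupHaagerupCond ℓ C) (p : ℕ) (A : Finset G)
    (hA : ∀ x ∈ A, ℓ x ≤ p) :
    (A.card : ℝ) ≤ 8 * C ^ 2 * ((p : ℝ) + 1) ^ 3 := by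
  have hC : 1 ≤ C := one_le_haagerup_const ℓ hℓ hH
  rcases Finset.eq_empty_or_nonempty A with hAe | hAne
  · rw [hAe]
    simp only [Finset.card_empty, Nat.cast_zero]
    positivity
  have hA0 : 0 < (A.card : ℝ) := by exact_mod_cast Finset.card_pos.mpr hAne
  set ε : ℝ := 1 / (2 * A.card) with hε
  have hε0 : 0 < ε := by positivity
  obtain ⟨F, hFne, hFol⟩ := ham A ε hε0
  have hF0 : 0 < (F.card : ℝ) := by exact_mod_cast Finset.card_pos.mpr hFne
  set T : Finset G := F.filter (fun y => ∀ a ∈ A, a⁻¹ * y ∈ F) with hT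
  -- T is large
  have hTcard : (F.card : ℝ) / 2 ≤ (T.card : ℝ) := by
    have hsub : F \ T ⊆ A.biUnion (fun a => F \ F.image (fun x => a * x)) := by
      intro y hy
      obtain ⟨hyF, hyT⟩ := Finset.mem_sdiff.mp hy
      have : ¬ ∀ a ∈ A, a⁻¹ * y ∈ F := fun h => hyT (Finset.mem_filter.mpr ⟨hyF, h⟩)
      push_neg at this
      obtain ⟨a, haA, hay⟩ := this
      refine Finset.mem_biUnion.mpr ⟨a, haA, Finset.mem_sdiff.mpr ⟨hyF, ?_⟩⟩
      intro hmem
      obtain ⟨x, hxF, hx⟩ := Finset.mem_image.mp hmem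
      apply hay
      rw [← hx]
      simpa using hxF
    have hsd : ∀ a : G, (F \ F.image (fun x => a * x)).card
        = ((F.image (fun x => a * x)) \ F).card := by
      intro a
      refine Finset.card_sdiff_comm ?_
      rw [Finset.card_image_of_injective _ (mul_right_injective a)]
    have h1 : ((F \ T).card : ℝ) ≤ (F.card : ℝ) / 2 := by
      calc ((F \ T).card : ℝ)
          ≤ ((A.biUnion (fun a => F \ F.image (fun x => a * x))).card : ℝ) := by
            exact_mod_cast Finset.card_le_card hsub
        _ ≤ ∑ a ∈ A, ((F \ F.image (fun x => a * x)).card : ℝ) := by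
            exact_mod_cast Finset.card_biUnion_le
        _ = ∑ a ∈ A, (((F.image (fun x => a * x)) \ F).card : ℝ) := by
            refine Finset.sum_congr rfl fun a _ => ?_
            rw [hsd a]
        _ ≤ ∑ a ∈ A, ε * F.card := Finset.sum_le_sum fun a ha => hFol a ha
        _ = A.card * (ε * F.card) := by rw [Finset.sum_const, nsmul_eq_mul]
        _ = (F.card : ℝ) / 2 := by
            rw [hε]
            field_simp
    have hTF : T ⊆ F := Finset.filter_subset _ _
    have h2 : (F.card : ℝ) ≤ (T.card : ℝ) + ((F \ T).card : ℝ) := by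
      have := Finset.card_sdiff_add_card_eq_card hTF
      exact_mod_cast le_of_eq (by omega)
    linarith
  -- the convolution is constant |A| on T
  have hval : ∀ y ∈ T, (indf A * indf F).coeff y = (A.card : ℂ) := by
    intro y hy
    rw [indf_mul_apply]
    obtain ⟨-, hyall⟩ := Finset.mem_filter.mp hy
    rw [Finset.sum_congr rfl fun a ha => by rw [indf_apply, if_pos (hyall a ha)]]
    simp
  -- lower bound for sq2
  have hlow : (T.card : ℝ) * (A.card : ℝ) ^ 2 ≤ sq2 (indf A * indf F) := by
    have hTsupp : T ⊆ (indf A * indf F).coeff.support := by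
      intro y hy
      rw [Finsupp.mem_support_iff, hval y hy]
      exact_mod_cast Nat.cast_ne_zero.mpr (Finset.card_ne_zero_of_mem (hAne.choose_spec))
    calc (T.card : ℝ) * (A.card : ℝ) ^ 2 = ∑ y ∈ T, ‖(indf A * indf F).coeff y‖ ^ 2 := by
          rw [Finset.sum_congr rfl fun y hy => by
            rw [hval y hy, Complex.norm_natCast]]
          rw [Finset.sum_const, nsmul_eq_mul]
      _ ≤ ∑ y ∈ (indf A * indf F).coeff.support, ‖(indf A * indf F).coeff y‖ ^ 2 :=
          Finset.sum_le_sum_of_subset_of_nonneg hTsupp fun _ _ _ => sq_nonneg _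
      _ = sq2 (indf A * indf F) := rfl
  -- upper bound
  have hup : sq2 (indf A * indf F) ≤
      C ^ 2 * ((p : ℝ) + 1) * (2 * (p : ℝ) + 1) ^ 2 * ((A.card : ℝ) * (F.card : ℝ)) := by
    have := key_mul_bound ℓ hℓ hH p (indf A) (indf F) ?_
    · rwa [sq2_indf, sq2_indf] at this
    · intro x hx
      exact hA x (indf_support A (Finsupp.mem_support_iff.mpr hx))
  -- combine
  have hcomb : (F.card : ℝ) / 2 * (A.card : ℝ) ^ 2 ≤
      C ^ 2 * ((p : ℝ) + 1) * (2 * (p : ℝ) + 1) ^ 2 * ((A.card : ℝ) * (F.card : ℝ)) := by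
    refine le_trans ?_ (le_trans hlow hup)
    exact mul_le_mul_of_nonneg_right hTcard (sq_nonneg _)
  have hstep : (A.card : ℝ) ≤ 2 * C ^ 2 * ((p : ℝ) + 1) * (2 * (p : ℝ) + 1) ^ 2 := by
    set D : ℝ := C ^ 2 * ((p : ℝ) + 1) * (2 * (p : ℝ) + 1) ^ 2 with hD
    have e : (F.card : ℝ) / 2 * (A.card : ℝ) ^ 2
        = ((A.card : ℝ) / 2) * ((A.card : ℝ) * (F.card : ℝ)) := by ring
    have h1 : ((A.card : ℝ) / 2) * ((A.card : ℝ) * (F.card : ℝ))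
        ≤ D * ((A.card : ℝ) * (F.card : ℝ)) := by rw [← e]; exact hcomb
    have h2 : (A.card : ℝ) / 2 ≤ D :=
      le_of_mul_le_mul_right h1 (by positivity)
    rw [hD] at h2
    linarith
  refine le_trans hstep ?_
  have hp1 : (0 : ℝ) ≤ (p : ℝ) + 1 := by positivity
  have hq : (2 * (p : ℝ) + 1) ^ 2 ≤ (2 * ((p : ℝ) + 1)) ^ 2 := by nlinarith [Nat.cast_nonneg (α := ℝ) p]
  nlinarith [sq_nonneg C, Nat.cast_nonneg (α := ℝ) p, hq, mul_le_mul_of_nonneg_left hq (show (0:ℝ) ≤ 2 * C ^2 * ((p:ℝ)+1) by positivity)]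

end final


/-- If `G` is an amenable discrete group with an integer-valued length function `ℓ`
satisfying the Haagerup-type condition, then the balls `B_p = {x : ℓ(x) ≤ p}` satisfy
`|B_p| ≤ C'(p+1)³` for some constant `C'` and all `p`. -/
theorem stmt_12 {G : Type*} [Group G] (ℓ : G → ℕ) (hℓ : IsLengthFunction ℓ)
    (ham : FolnerAmenable G) (C : ℝ) (hH : GroupHaagerupCond ℓ C) :
    ∃ C' : ℝ, ∀ p : ℕ,
      {x : G | ℓ x ≤ p}.Finite ∧
      (Nat.card {x : G | ℓ x ≤ p} : ℝ) ≤ C' * ((p : ℝ) + 1) ^ 3 := by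
  refine ⟨8 * C ^ 2, fun p => ?_⟩
  have hbound : ∀ A : Finset G, (∀ x ∈ A, ℓ x ≤ p) →
      (A.card : ℝ) ≤ 8 * C ^ 2 * ((p : ℝ) + 1) ^ 3 :=
    fun A hA => card_ball_bound ℓ hℓ ham hH p A hA
  have hfin : {x : G | ℓ x ≤ p}.Finite := by
    by_contra h
    have hinf : {x : G | ℓ x ≤ p}.Infinite := h
    obtain ⟨A, hAsub, hAcard⟩ :=
      hinf.exists_subset_card_eq (⌊8 * C ^ 2 * ((p : ℝ) + 1) ^ 3⌋₊ + 1)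
    have h1 := hbound A (fun x hx => hAsub hx)
    rw [hAcard] at h1
    have h2 := Nat.lt_floor_add_one (8 * C ^ 2 * ((p : ℝ) + 1) ^ 3)
    push_cast at h1
    linarith
  refine ⟨hfin, ?_⟩
  have hcard : Nat.card {x : G | ℓ x ≤ p} = hfin.toFinset.card := by
    rw [Nat.card_coe_set_eq, Set.ncard_eq_toFinset_card _ hfin]
  rw [hcard]
  exact hbound hfin.toFinset fun x hx => (Set.Finite.mem_toFinset hfin).mp hx
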